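/- arXiv:gr-qc/9604056 — 2 statements merged into one kernel-verified Lean document; each statement's English description precedes it below -/
import Mathlib

section
/- Let g₁ = (g₁¹, g₁², 0) and g₂ = (g₂¹, g₂², 0) be elements of the Nil group with d := g₁¹g₂² − g₁²g₂¹ ≠ 0, and set N := √((g₁¹)² + (g₁²)²). Then there exist θ ∈ ℝ and h in the Nil group such that h·σ_θ(g₁)·h⁻¹ = (N, 0, 0) and h·σ_θ(g₂)·h⁻¹ = ((g₁¹g₂¹ + g₁²g₂²)/N, (g₁¹g₂² − g₁²g₂¹)/N, 0), where σ_θ(g) := (R_θ(g¹,g²), g³ + ζ_θ(g¹,g²)). -/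
noncomputable section

open Real

/-- Multiplication in the Nil (Bianchi II) group on ℝ³. -/
def nilMul (g h : ℝ × ℝ × ℝ) : ℝ × ℝ × ℝ :=
  (g.1 + h.1, g.2.1 + h.2.1, g.2.2 + h.2.2 + g.1 * h.2.1)

/-- Inverse in the Nil group. -/
def nilInv (g : ℝ × ℝ × ℝ) : ℝ × ℝ × ℝ :=
  (-g.1, -g.2.1, -g.2.2 + g.1 * g.2.1)

/-- `ζ_θ(x,y) = ½((x²−y²)cos θ − 2xy sin θ) sin θ`. -/
def zeta (θ x y : ℝ) : ℝ :=
  (1 / 2) * ((x ^ 2 - y ^ 2) * Real.cos θ - 2 * x * y * Real.sin θ) * Real.sin θ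

/-- The group automorphism `σ_θ(g) = (R_θ(g¹,g²), g³ + ζ_θ(g¹,g²))` of Nil. -/
def sigmaMap (θ : ℝ) (g : ℝ × ℝ × ℝ) : ℝ × ℝ × ℝ :=
  (g.1 * Real.cos θ - g.2.1 * Real.sin θ,
   g.1 * Real.sin θ + g.2.1 * Real.cos θ,
   g.2.2 + zeta θ g.1 g.2.1)

/-- For `g₁ = (g₁¹,g₁²,0)`, `g₂ = (g₂¹,g₂²,0)` with `d = g₁¹g₂² − g₁²g₂¹ ≠ 0` and
`N = √((g₁¹)² + (g₁²)²)`, there are `θ` and `h` with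
`h·σ_θ(g₁)·h⁻¹ = (N,0,0)` and `h·σ_θ(g₂)·h⁻¹ = ((g₁¹g₂¹+g₁²g₂²)/N, (g₁¹g₂²−g₁²g₂¹)/N, 0)`. -/
theorem nil_rotate_to_teichmuller (g₁₁ g₁₂ g₂₁ g₂₂ : ℝ)
    (hd : g₁₁ * g₂₂ - g₁₂ * g₂₁ ≠ 0) :
    ∃ (θ : ℝ) (h : ℝ × ℝ × ℝ),
      nilMul (nilMul h (sigmaMap θ (g₁₁, g₁₂, (0 : ℝ)))) (nilInv h)
        = (Real.sqrt (g₁₁ ^ 2 + g₁₂ ^ 2), (0 : ℝ), (0 : ℝ)) ∧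
      nilMul (nilMul h (sigmaMap θ (g₂₁, g₂₂, (0 : ℝ)))) (nilInv h)
        = ((g₁₁ * g₂₁ + g₁₂ * g₂₂) / Real.sqrt (g₁₁ ^ 2 + g₁₂ ^ 2),
           (g₁₁ * g₂₂ - g₁₂ * g₂₁) / Real.sqrt (g₁₁ ^ 2 + g₁₂ ^ 2), (0 : ℝ)) := by
  set N := Real.sqrt (g₁₁ ^ 2 + g₁₂ ^ 2) with hNdef
  have hg1 : ¬(g₁₁ = 0 ∧ g₁₂ = 0) := by
    rintro ⟨h1, h2⟩; apply hd; rw [h1, h2]; ring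
  have hpos : 0 < g₁₁ ^ 2 + g₁₂ ^ 2 := by
    rcases not_and_or.mp hg1 with h | h <;> positivity
  have hN2 : N ^ 2 = g₁₁ ^ 2 + g₁₂ ^ 2 := Real.sq_sqrt hpos.le
  have hN : N ≠ 0 := (Real.sqrt_pos.mpr hpos).ne'
  set z : ℂ := ⟨g₁₁, -g₁₂⟩ with hz
  have hz0 : z ≠ 0 := by
    intro h0
    apply hg1
    constructor
    · have := congrArg Complex.re h0; simpa using this
    · have := congrArg Complex.im h0; simpa [hz] using this
  have habs : ‖z‖ = N := by
    rw [Complex.norm_def, Complex.normSq_mk, hNdef]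
    ring_nf
  set θ := Complex.arg z with hθ
  have hcos : Real.cos θ = g₁₁ / N := by
    rw [hθ, Complex.cos_arg hz0, habs]
  have hsin : Real.sin θ = -g₁₂ / N := by
    rw [hθ, Complex.sin_arg, habs]
  set d := g₁₁ * g₂₂ - g₁₂ * g₂₁ with hddef
  set p := g₁₁ * g₂₁ + g₁₂ * g₂₂ with hpdef
  have s1a : g₁₁ * Real.cos θ - g₁₂ * Real.sin θ = N := by
    rw [hcos, hsin]; field_simp; linarith [hN2]
  have s1b : g₁₁ * Real.sin θ + g₁₂ * Real.cos θ = 0 := by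
    rw [hcos, hsin]; field_simp; ring
  have s2a : g₂₁ * Real.cos θ - g₂₂ * Real.sin θ = p / N := by
    rw [hcos, hsin, hpdef]; field_simp; ring
  have s2b : g₂₁ * Real.sin θ + g₂₂ * Real.cos θ = d / N := by
    rw [hcos, hsin, hddef]; field_simp; ring
  set z1 := zeta θ g₁₁ g₁₂ with hz1
  set z2 := zeta θ g₂₁ g₂₂ with hz2
  set b := z1 / N with hb
  set a := (b * p / N - z2) * N / d with ha
  have hz1v : z1 = b * N := by rw [hb]; field_simp
  have hz2v : z2 = b * (p / N) - a * (d / N) := by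
    rw [ha, hb]; field_simp; ring
  refine ⟨θ, (a, b, 0), ?_, ?_⟩
  · simp only [nilMul, nilInv, sigmaMap, Prod.mk.injEq]
    refine ⟨?_, ?_, ?_⟩
    · linear_combination s1a
    · linear_combination s1b
    · linear_combination hz1v + a * s1b - b * s1a
  · simp only [nilMul, nilInv, sigmaMap, Prod.mk.injEq]
    refine ⟨?_, ?_, ?_⟩
    · linear_combination s2a
    · linear_combination s2b
    · linear_combination hz2v + a * s2b - b * s2a
end
end

section
/- Let g₁¹, g₁², g₂¹, g₂² be reals with d := g₁¹g₂² − g₁²g₂¹ ≠ 0 and let h₁, h₂, h₃ > 0. Define the Teichmüller parameters a₁¹ := √((h₃/h₂)(g₁¹)² + (h₃/h₁)(g₁²)²), a₂¹ := ((h₃/h₂)g₁¹g₂¹ + (h₃/h₁)g₁²g₂²)/a₁¹, and a₂² := (h₃/√(h₁h₂))·d/a₁¹. Then there exist θ ∈ ℝ and h in the Nil group such that h·σ_θ(φ(g₁¹, g₁², 0))·h⁻¹ = (a₁¹, 0, 0) and h·σ_θ(φ(g₂¹, g₂², 0))·h⁻¹ = (a₂¹, a₂², 0), where φ(x,y,z)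 = (√(h₃/h₂)·x, √(h₃/h₁)·y, (h₃/√(h₁h₂))·z). -/
noncomputable section

open Real

/-- The automorphism `φ(x,y,z) = (√(h₃/h₂)x, √(h₃/h₁)y, (h₃/√(h₁h₂))z)` of Nil. -/
def phiMap (h₁ h₂ h₃ : ℝ) (g : ℝ × ℝ × ℝ) : ℝ × ℝ × ℝ :=
  (Real.sqrt (h₃ / h₂) * g.1, Real.sqrt (h₃ / h₁) * g.2.1,
    h₃ / Real.sqrt (h₁ * h₂) * g.2.2)

lemma exists_cos_sin (a b : ℝ) (h : a ^ 2 + b ^ 2 = 1) :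
    ∃ θ : ℝ, Real.cos θ = a ∧ Real.sin θ = b := by
  have ha1 : -1 ≤ a := by nlinarith
  have ha2 : a ≤ 1 := by nlinarith
  have hsin : Real.sin (Real.arccos a) = Real.sqrt (1 - a ^ 2) := by
    rw [Real.sin_arccos]
  have h1a : 1 - a ^ 2 = b ^ 2 := by linarith
  rcases le_or_gt 0 b with hb | hb
  · refine ⟨Real.arccos a, Real.cos_arccos ha1 ha2, ?_⟩
    rw [hsin, h1a, Real.sqrt_sq hb]
  · refine ⟨-Real.arccos a, by rw [Real.cos_neg]; exact Real.cos_arccos ha1 ha2, ?_⟩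
    rw [Real.sin_neg, hsin, h1a, Real.sqrt_sq_eq_abs, abs_of_neg hb, neg_neg]

/-- The Teichmüller parameters of the b/1 model: there exist `θ` and `h` conjugating the
images of the generators under `σ_θ ∘ φ` to `(a₁¹,0,0)` and `(a₂¹,a₂²,0)`. -/
theorem nil_teichmuller_parameters (g₁₁ g₁₂ g₂₁ g₂₂ : ℝ)
    (hd : g₁₁ * g₂₂ - g₁₂ * g₂₁ ≠ 0)
    (h₁ h₂ h₃ : ℝ) (hh₁ : 0 < h₁) (hh₂ : 0 < h₂) (hh₃ : 0 < h₃) :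
    ∃ (θ : ℝ) (h : ℝ × ℝ × ℝ),
      nilMul (nilMul h (sigmaMap θ (phiMap h₁ h₂ h₃ (g₁₁, g₁₂, (0 : ℝ))))) (nilInv h)
        = (Real.sqrt (h₃ / h₂ * g₁₁ ^ 2 + h₃ / h₁ * g₁₂ ^ 2), (0 : ℝ), (0 : ℝ)) ∧
      nilMul (nilMul h (sigmaMap θ (phiMap h₁ h₂ h₃ (g₂₁, g₂₂, (0 : ℝ))))) (nilInv h)
        = ((h₃ / h₂ * (g₁₁ * g₂₁) + h₃ / h₁ * (g₁₂ * g₂₂)) /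
             Real.sqrt (h₃ / h₂ * g₁₁ ^ 2 + h₃ / h₁ * g₁₂ ^ 2),
           h₃ / Real.sqrt (h₁ * h₂) * (g₁₁ * g₂₂ - g₁₂ * g₂₁) /
             Real.sqrt (h₃ / h₂ * g₁₁ ^ 2 + h₃ / h₁ * g₁₂ ^ 2),
           (0 : ℝ)) := by
  set A := Real.sqrt (h₃ / h₂) with hAdef
  set B := Real.sqrt (h₃ / h₁) with hBdef
  have hA2 : A ^ 2 = h₃ / h₂ := Real.sq_sqrt (by positivity)
  have hB2 : B ^ 2 = h₃ / h₁ := Real.sq_sqrt (by positivity)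
  have hA0 : 0 < A := Real.sqrt_pos.mpr (by positivity)
  have hB0 : 0 < B := Real.sqrt_pos.mpr (by positivity)
  have hAB : A * B = h₃ / Real.sqrt (h₁ * h₂) := by
    rw [hAdef, hBdef, ← Real.sqrt_mul (by positivity),
      show h₃ / h₂ * (h₃ / h₁) = h₃ ^ 2 / (h₁ * h₂) by field_simp,
      Real.sqrt_div (by positivity), Real.sqrt_sq hh₃.le]
  have hg : g₁₁ ≠ 0 ∨ g₁₂ ≠ 0 := by
    by_contra hcon
    push_neg at hcon
    exact hd (by rw [hcon.1, hcon.2]; ring)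
  have hSpos : 0 < (A * g₁₁) ^ 2 + (B * g₁₂) ^ 2 := by
    rcases hg with hg | hg
    · have h1 : A * g₁₁ ≠ 0 := mul_ne_zero hA0.ne' hg
      nlinarith [pow_two_pos_of_ne_zero h1, sq_nonneg (B * g₁₂)]
    · have h1 : B * g₁₂ ≠ 0 := mul_ne_zero hB0.ne' hg
      nlinarith [pow_two_pos_of_ne_zero h1, sq_nonneg (A * g₁₁)]
  set r := Real.sqrt ((A * g₁₁) ^ 2 + (B * g₁₂) ^ 2) with hrdef
  have hr0 : 0 < r := Real.sqrt_pos.mpr hSpos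
  have hr2 : r ^ 2 = (A * g₁₁) ^ 2 + (B * g₁₂) ^ 2 := Real.sq_sqrt hSpos.le
  have hrS : Real.sqrt (h₃ / h₂ * g₁₁ ^ 2 + h₃ / h₁ * g₁₂ ^ 2) = r := by
    rw [hrdef]
    congr 1
    rw [← hA2, ← hB2]; ring
  obtain ⟨θ, hc, hs⟩ := exists_cos_sin (A * g₁₁ / r) (-(B * g₁₂ / r))
    (by field_simp; linarith [hr2])
  have hD0 : A * g₁₁ * (B * g₂₂) - B * g₁₂ * (A * g₂₁) ≠ 0 := by
    rw [show A * g₁₁ * (B * g₂₂) - B * g₁₂ * (A * g₂₁)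
        = A * B * (g₁₁ * g₂₂ - g₁₂ * g₂₁) by ring]
    exact mul_ne_zero (by positivity) hd
  set β := -(A * g₁₁ * (B * g₁₂)) / (2 * r) with hβdef
  set Z : ℝ := (1 / 2) * (((A * g₂₁) ^ 2 - (B * g₂₂) ^ 2) * (A * g₁₁ / r)
      - 2 * (A * g₂₁) * (B * g₂₂) * (-(B * g₁₂ / r))) * (-(B * g₁₂ / r)) with hZdef
  set α := (β * (A * g₁₁ * (A * g₂₁) + B * g₁₂ * (B * g₂₂)) - r * Z)
      / (A * g₁₁ * (B * g₂₂) - B * g₁₂ * (A * g₂₁)) with hαdef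
  clear_value A B r β Z α
  refine ⟨θ, (α, β, 0), ?_, ?_⟩
  · rw [hrS]
    simp only [nilMul, nilInv, sigmaMap, phiMap, zeta, hc, hs, ← hAdef, ← hBdef,
      Prod.mk.injEq]
    refine ⟨?_, ?_, ?_⟩
    · field_simp
      linarith [hr2]
    · field_simp
      linarith [hr2]
    · rw [hβdef]
      field_simp
      linarith [hr2]
  · rw [hrS]
    simp only [nilMul, nilInv, sigmaMap, phiMap, zeta, hc, hs, ← hAdef, ← hBdef,
      Prod.mk.injEq]
    refine ⟨?_, ?_, ?_⟩
    · rw [← hA2, ← hB2]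
      field_simp
      ring
    · rw [← hAB]
      field_simp
      ring
    · rw [hαdef, hZdef, hβdef, show A * g₁₁ * (B * g₂₂) - B * g₁₂ * (A * g₂₁)
          = A * B * (g₁₁ * g₂₂ - g₁₂ * g₂₁) by ring]
      have hd' : g₂₂ * g₁₁ - g₂₁ * g₁₂ ≠ 0 := by rw [mul_comm g₂₂, mul_comm g₂₁]; exact hd
      field_simp
      ring
end
end
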